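/- Let n ≥ 1, ℓ ≥ 3, and let W : V(K_n) → (0,∞) be a strictly positive vertex-weight function. If G is a K_ℓ-free subgraph of K_n whose product-edge-weight w_Π(G) = Σ_{uv ∈ E(G)} W(u)W(v) is maximum among all K_ℓ-free subgraphs of K_n, then G is complete multipartite; that is, there do not exist three vertices x, y, z of G with yz ∈ E(G) but xy ∉ E(G) and xz ∉ E(G). -/

import Mathlib

open Finset

open scoped Classical

section Aux

variable {n : ℕ}

/-- Replace the neighborhood of `x` by that of `y` (Zykov copy). -/
def copyG (G : SimpleGraph (Fin n)) (x y : Fin n) : SimpleGraph (Fin n) where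
  Adj a b := (a ≠ x ∧ b ≠ x ∧ G.Adj a b) ∨ (a = x ∧ b ≠ x ∧ G.Adj y b) ∨
    (b = x ∧ a ≠ x ∧ G.Adj y a)
  symm := by
    constructor
    intro a b h
    rcases h with ⟨h1, h2, h3⟩ | ⟨h1, h2, h3⟩ | ⟨h1, h2, h3⟩
    · exact Or.inl ⟨h2, h1, h3.symm⟩
    · exact Or.inr (Or.inr ⟨h1, h2, h3⟩)
    · exact Or.inr (Or.inl ⟨h1, h2, h3⟩)
  loopless := by
    constructor
    intro a h
    rcases h with ⟨h1, h2, h3⟩ | ⟨h1, h2, h3⟩ | ⟨h1, h2, h3⟩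
    · exact G.loopless.irrefl a h3
    · exact h2 h1
    · exact h2 h1

/-- Replace the neighborhoods of both `y` and `z` by that of `x`. -/
def copy2 (G : SimpleGraph (Fin n)) (x y z : Fin n) : SimpleGraph (Fin n) where
  Adj a b := ((a ≠ y ∧ a ≠ z) ∧ (b ≠ y ∧ b ≠ z) ∧ G.Adj a b) ∨
    ((a = y ∨ a = z) ∧ (b ≠ y ∧ b ≠ z) ∧ G.Adj x b) ∨
    ((b = y ∨ b = z) ∧ (a ≠ y ∧ a ≠ z) ∧ G.Adj x a)
  symm := by
    constructor
    intro a b h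
    rcases h with ⟨h1, h2, h3⟩ | ⟨h1, h2, h3⟩ | ⟨h1, h2, h3⟩
    · exact Or.inl ⟨h2, h1, h3.symm⟩
    · exact Or.inr (Or.inr ⟨h1, h2, h3⟩)
    · exact Or.inr (Or.inl ⟨h1, h2, h3⟩)
  loopless := by
    constructor
    intro a h
    rcases h with ⟨h1, h2, h3⟩ | ⟨h1, h2, h3⟩ | ⟨h1, h2, h3⟩
    · exact G.loopless.irrefl a h3
    · rcases h1 with rfl | rfl
      · exact h2.1 rfl
      · exact h2.2 rfl
    · rcases h1 with rfl | rfl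
      · exact h2.1 rfl
      · exact h2.2 rfl

lemma copyG_cliqueFree {G : SimpleGraph (Fin n)} {ℓ : ℕ} (hG : G.CliqueFree ℓ)
    (x y : Fin n) (hxy : x ≠ y) : (copyG G x y).CliqueFree ℓ := by
  intro S hS
  by_cases hx : x ∈ S
  · -- y ∉ S, replace x by y
    have hyS : y ∉ S := by
      intro hy
      have := hS.1 (Finset.mem_coe.2 hx) (Finset.mem_coe.2 hy) hxy
      rcases this with ⟨h1, _, _⟩ | ⟨_, _, h3⟩ | ⟨h1, _, _⟩
      · exact h1 rfl
      · exact G.loopless.irrefl y h3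
      · exact hxy h1.symm
    refine hG (insert y (S.erase x)) ⟨?_, ?_⟩
    · intro a ha b hb hab
      simp only [Finset.coe_insert, Set.mem_insert_iff, Finset.coe_erase,
        Set.mem_diff, Set.mem_singleton_iff, Finset.mem_coe] at ha hb
      rcases ha with rfl | ⟨haS, hax⟩
      · rcases hb with rfl | ⟨hbS, hbx⟩
        · exact absurd rfl hab
        · -- need G.Adj y b from copyG adj of x b
          have hxb : x ≠ b := fun h => hbx h.symm
          have := hS.1 (Finset.mem_coe.2 hx) (Finset.mem_coe.2 (Finset.mem_coe.1 hbS)) hxb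
          rcases this with ⟨h1, _, _⟩ | ⟨_, _, h3⟩ | ⟨h1, _, _⟩
          · exact absurd rfl h1
          · exact h3
          · exact absurd h1 hbx
      · rcases hb with rfl | ⟨hbS, hbx⟩
        · have hxa : x ≠ a := fun h => hax h.symm
          have := hS.1 (Finset.mem_coe.2 hx) (Finset.mem_coe.2 haS) hxa
          rcases this with ⟨h1, _, _⟩ | ⟨_, _, h3⟩ | ⟨h1, _, _⟩
          · exact absurd rfl h1
          · exact h3.symm
          · exact absurd h1 hax
        · have := hS.1 (Finset.mem_coe.2 haS) (Finset.mem_coe.2 hbS) hab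
          rcases this with ⟨_, _, h3⟩ | ⟨h1, _, _⟩ | ⟨h1, _, _⟩
          · exact h3
          · exact absurd h1 hax
          · exact absurd h1 hbx
    · have hℓ1 : 1 ≤ ℓ := hS.2 ▸ Finset.card_pos.2 ⟨x, hx⟩
      rw [Finset.card_insert_of_notMem (fun h => hyS (Finset.mem_of_mem_erase h)),
        Finset.card_erase_of_mem hx, hS.2]
      omega
  · refine hG S ⟨?_, hS.2⟩
    intro a ha b hb hab
    have hax : a ≠ x := fun h => hx (h ▸ Finset.mem_coe.1 ha)
    have hbx : b ≠ x := fun h => hx (h ▸ Finset.mem_coe.1 hb)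
    rcases hS.1 ha hb hab with ⟨_, _, h3⟩ | ⟨h1, _, _⟩ | ⟨h1, _, _⟩
    · exact h3
    · exact absurd h1 hax
    · exact absurd h1 hbx

end Aux

section Aux2

variable {n : ℕ}

lemma copy2_comm (G : SimpleGraph (Fin n)) (x y z : Fin n) :
    copy2 G x y z = copy2 G x z y := by
  ext a b
  simp only [copy2]
  tauto

lemma copy2_cliqueFree_case {G : SimpleGraph (Fin n)} {ℓ : ℕ} (hG : G.CliqueFree ℓ)
    {x y z : Fin n} (hxy : x ≠ y) (hxz : x ≠ z) (hyz : y ≠ z)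
    {S : Finset (Fin n)} (hS : (copy2 G x y z).IsNClique ℓ S)
    (hy : y ∈ S) (hz : z ∉ S) : False := by
  have hxS : x ∉ S := by
    intro hx
    have := hS.1 (Finset.mem_coe.2 hy) (Finset.mem_coe.2 hx) (fun h => hxy h.symm)
    rcases this with ⟨h1, _, _⟩ | ⟨_, h2, h3⟩ | ⟨h1, _, _⟩
    · exact h1.1 rfl
    · exact G.loopless.irrefl x h3
    · rcases h1 with h | h
      · exact hxy h
      · exact hxz h
  refine hG (insert x (S.erase y)) ⟨?_, ?_⟩
  · intro a ha b hb hab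
    simp only [Finset.coe_insert, Set.mem_insert_iff, Finset.coe_erase,
      Set.mem_diff, Set.mem_singleton_iff, Finset.mem_coe] at ha hb
    have key : ∀ c : Fin n, c ∈ S → c ≠ y → G.Adj x c := by
      intro c hc hcy
      have hcz : c ≠ z := fun h => hz (h ▸ hc)
      have hyc : y ≠ c := fun h => hcy h.symm
      have := hS.1 (Finset.mem_coe.2 hy) (Finset.mem_coe.2 hc) hyc
      rcases this with ⟨h1, _, _⟩ | ⟨_, _, h3⟩ | ⟨h1, h2, _⟩
      · exact absurd rfl h1.1
      · exact h3
      · exact absurd rfl h2.1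
    have keyG : ∀ a b : Fin n, a ∈ S → b ∈ S → a ≠ y → b ≠ y → a ≠ b → G.Adj a b := by
      intro a b haS hbS hay hby hab
      have haz : a ≠ z := fun h => hz (h ▸ haS)
      have hbz : b ≠ z := fun h => hz (h ▸ hbS)
      have := hS.1 (Finset.mem_coe.2 haS) (Finset.mem_coe.2 hbS) hab
      rcases this with ⟨_, _, h3⟩ | ⟨h1, _, _⟩ | ⟨h1, _, _⟩
      · exact h3
      · rcases h1 with h | h
        · exact absurd h hay
        · exact absurd h haz
      · rcases h1 with h | h
        · exact absurd h hby
        · exact absurd h hbz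
    rcases ha with rfl | ⟨haS, hay⟩
    · rcases hb with rfl | ⟨hbS, hby⟩
      · exact absurd rfl hab
      · exact key b hbS hby
    · rcases hb with rfl | ⟨hbS, hby⟩
      · exact (key a haS hay).symm
      · exact keyG a b haS hbS hay hby hab
  · have hℓ1 : 1 ≤ ℓ := hS.2 ▸ Finset.card_pos.2 ⟨y, hy⟩
    have hxE : x ∉ S.erase y := fun h => hxS (Finset.mem_of_mem_erase h)
    rw [Finset.card_insert_of_notMem hxE, Finset.card_erase_of_mem hy, hS.2]
    omega

lemma copy2_cliqueFree {G : SimpleGraph (Fin n)} {ℓ : ℕ} (hG : G.CliqueFree ℓ)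
    {x y z : Fin n} (hxy : x ≠ y) (hxz : x ≠ z) (hyz : y ≠ z) :
    (copy2 G x y z).CliqueFree ℓ := by
  intro S hS
  by_cases hy : y ∈ S <;> by_cases hz : z ∈ S
  · -- both y and z in S: but they are non-adjacent in copy2
    have := hS.1 (Finset.mem_coe.2 hy) (Finset.mem_coe.2 hz) hyz
    rcases this with ⟨h1, _, _⟩ | ⟨_, h2, _⟩ | ⟨_, h2, _⟩
    · exact h1.1 rfl
    · exact h2.2 rfl
    · exact h2.1 rfl
  · exact copy2_cliqueFree_case hG hxy hxz hyz hS hy hz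
  · rw [copy2_comm] at hS
    exact copy2_cliqueFree_case hG hxz hxy hyz.symm hS hz hy
  · -- neither: S is a clique of G
    refine hG S ⟨?_, hS.2⟩
    intro a ha b hb hab
    have hay : a ≠ y := fun h => hy (h ▸ Finset.mem_coe.1 ha)
    have haz : a ≠ z := fun h => hz (h ▸ Finset.mem_coe.1 ha)
    have hby : b ≠ y := fun h => hy (h ▸ Finset.mem_coe.1 hb)
    have hbz : b ≠ z := fun h => hz (h ▸ Finset.mem_coe.1 hb)
    rcases hS.1 ha hb hab with ⟨_, _, h3⟩ | ⟨h1, _, _⟩ | ⟨h1, _, _⟩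
    · exact h3
    · rcases h1 with h | h
      · exact absurd h hay
      · exact absurd h haz
    · rcases h1 with h | h
      · exact absurd h hby
      · exact absurd h hbz

end Aux2

section Aux3

variable {n : ℕ}

lemma sum_sum_ite_left (x : Fin n) (g : Fin n → ℝ) :
    ∑ u : Fin n, ∑ v : Fin n, (if u = x then g v else 0) = ∑ v : Fin n, g v := by
  have h1 : ∀ u : Fin n, (∑ v : Fin n, if u = x then g v else 0)
      = if u = x then (∑ v : Fin n, g v) else 0 := by
    intro u; split <;> simp
  rw [Finset.sum_congr rfl fun u _ => h1 u]
  simp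

lemma sum_sum_ite_right (x : Fin n) (g : Fin n → ℝ) :
    ∑ u : Fin n, ∑ v : Fin n, (if v = x then g u else 0) = ∑ u : Fin n, g u := by
  refine Finset.sum_congr rfl fun u _ => ?_
  simp

lemma ite_mul_left (c : Prop) [Decidable c] (a b : ℝ) :
    (if c then a * b else 0) = a * (if c then b else 0) := by
  split <;> simp

lemma ite_mul_right (c : Prop) [Decidable c] (a b : ℝ) :
    (if c then a * b else 0) = b * (if c then a else 0) := by
  split <;> simp [mul_comm]

lemma copyG_wsum (W : Fin n → ℝ) (G : SimpleGraph (Fin n)) (x y : Fin n)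
    (hna : ¬ G.Adj x y) :
    (∑ u : Fin n, ∑ v : Fin n, if (copyG G x y).Adj u v then W u * W v else 0)
    = (∑ u : Fin n, ∑ v : Fin n, if G.Adj u v then W u * W v else 0)
      + 2 * W x * ((∑ v : Fin n, if G.Adj y v then W v else 0)
        - (∑ v : Fin n, if G.Adj x v then W v else 0)) := by
  have hna' : ¬ G.Adj y x := fun h => hna h.symm
  have key : ∀ u v : Fin n,
      (if (copyG G x y).Adj u v then W u * W v else 0) =
      (if G.Adj u v then W u * W v else 0)
      + (if u = x then ((if G.Adj y v then W x * W v else 0)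
          - (if G.Adj x v then W x * W v else 0)) else 0)
      + (if v = x then ((if G.Adj y u then W u * W x else 0)
          - (if G.Adj x u then W u * W x else 0)) else 0) := by
    intro u v
    by_cases hu : u = x <;> by_cases hv : v = x
    · rw [hu, hv]
      simp [copyG, hna', G.loopless]
    · rw [hu]
      have hAdj : (copyG G x y).Adj x v ↔ G.Adj y v := by
        constructor
        · rintro (⟨h1, _, _⟩ | ⟨_, _, h3⟩ | ⟨h1, _, _⟩)
          · exact absurd rfl h1
          · exact h3
          · exact absurd h1 hv
        · intro h; exact Or.inr (Or.inl ⟨rfl, hv, h⟩)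
      rw [if_congr hAdj rfl rfl, if_neg hv, if_pos rfl]
      ring
    · rw [hv]
      have hAdj : (copyG G x y).Adj u x ↔ G.Adj y u := by
        constructor
        · rintro (⟨_, h2, _⟩ | ⟨h1, _, _⟩ | ⟨_, _, h3⟩)
          · exact absurd rfl h2
          · exact absurd h1 hu
          · exact h3
        · intro h; exact Or.inr (Or.inr ⟨rfl, hu, h⟩)
      rw [if_congr hAdj rfl rfl, if_neg hu, if_pos rfl,
        if_congr (G.adj_comm u x) rfl rfl]
      ring
    · have hAdj : (copyG G x y).Adj u v ↔ G.Adj u v := by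
        constructor
        · rintro (⟨_, _, h3⟩ | ⟨h1, _, _⟩ | ⟨h1, _, _⟩)
          · exact h3
          · exact absurd h1 hu
          · exact absurd h1 hv
        · intro h; exact Or.inl ⟨hu, hv, h⟩
      rw [if_congr hAdj rfl rfl, if_neg hu, if_neg hv]
      ring
  calc (∑ u : Fin n, ∑ v : Fin n, if (copyG G x y).Adj u v then W u * W v else 0)
      = (∑ u : Fin n, ∑ v : Fin n, if G.Adj u v then W u * W v else 0)
        + (∑ u : Fin n, ∑ v : Fin n, if u = x then
            ((if G.Adj y v then W x * W v else 0)
              - (if G.Adj x v then W x * W v else 0)) else 0)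
        + (∑ u : Fin n, ∑ v : Fin n, if v = x then
            ((if G.Adj y u then W u * W x else 0)
              - (if G.Adj x u then W u * W x else 0)) else 0) := by
        simp_rw [key, Finset.sum_add_distrib]
    _ = (∑ u : Fin n, ∑ v : Fin n, if G.Adj u v then W u * W v else 0)
        + 2 * W x * ((∑ v : Fin n, if G.Adj y v then W v else 0)
          - (∑ v : Fin n, if G.Adj x v then W v else 0)) := by
        rw [sum_sum_ite_left, sum_sum_ite_right]
        simp_rw [Finset.sum_sub_distrib]
        simp_rw [ite_mul_left (a := W x)]
        simp_rw [ite_mul_right (b := W x), ← Finset.mul_sum]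
        ring

end Aux3

section Aux4

variable {n : ℕ}

lemma copy2_wsum (W : Fin n → ℝ) (G : SimpleGraph (Fin n)) (x y z : Fin n)
    (hnxy : ¬ G.Adj x y) (hnxz : ¬ G.Adj x z) (hAyz : G.Adj y z) :
    (∑ u : Fin n, ∑ v : Fin n, if (copy2 G x y z).Adj u v then W u * W v else 0)
    = (∑ u : Fin n, ∑ v : Fin n, if G.Adj u v then W u * W v else 0)
      + 2 * W y * ((∑ v : Fin n, if G.Adj x v then W v else 0)
        - (∑ v : Fin n, if G.Adj y v then W v else 0))
      + 2 * W z * ((∑ v : Fin n, if G.Adj x v then W v else 0)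
        - (∑ v : Fin n, if G.Adj z v then W v else 0))
      + 2 * W y * W z := by
  have hnyx : ¬ G.Adj y x := fun h => hnxy h.symm
  have hnzx : ¬ G.Adj z x := fun h => hnxz h.symm
  have hAzy : G.Adj z y := hAyz.symm
  have hyzne : y ≠ z := hAyz.ne
  have hzyne : z ≠ y := hyzne.symm
  have hAy : ∀ v, (copy2 G x y z).Adj y v ↔ G.Adj x v := by
    intro v
    constructor
    · rintro (⟨h1, _, _⟩ | ⟨_, _, h3⟩ | ⟨_, h2, _⟩)
      · exact absurd rfl h1.1
      · exact h3
      · exact absurd rfl h2.1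
    · intro h
      exact Or.inr (Or.inl ⟨Or.inl rfl, ⟨fun hv => hnxy (hv ▸ h), fun hv => hnxz (hv ▸ h)⟩, h⟩)
  have hAz : ∀ v, (copy2 G x y z).Adj z v ↔ G.Adj x v := by
    intro v
    constructor
    · rintro (⟨h1, _, _⟩ | ⟨_, _, h3⟩ | ⟨_, h2, _⟩)
      · exact absurd rfl h1.2
      · exact h3
      · exact absurd rfl h2.2
    · intro h
      exact Or.inr (Or.inl ⟨Or.inr rfl, ⟨fun hv => hnxy (hv ▸ h), fun hv => hnxz (hv ▸ h)⟩, h⟩)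
  have hR : ∀ u v : Fin n, u ≠ y → u ≠ z → v ≠ y → v ≠ z →
      ((copy2 G x y z).Adj u v ↔ G.Adj u v) := by
    intro u v h1 h2 h3 h4
    constructor
    · rintro (⟨_, _, h⟩ | ⟨hc, _, _⟩ | ⟨hc, _, _⟩)
      · exact h
      · rcases hc with h | h
        · exact absurd h h1
        · exact absurd h h2
      · rcases hc with h | h
        · exact absurd h h3
        · exact absurd h h4
    · intro h
      exact Or.inl ⟨⟨h1, h2⟩, ⟨h3, h4⟩, h⟩
  have hAyv : ∀ u, (copy2 G x y z).Adj u y ↔ G.Adj x u := by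
    intro u
    rw [(copy2 G x y z).adj_comm]
    exact hAy u
  have hAzv : ∀ u, (copy2 G x y z).Adj u z ↔ G.Adj x u := by
    intro u
    rw [(copy2 G x y z).adj_comm]
    exact hAz u
  have key : ∀ u v : Fin n,
      (if (copy2 G x y z).Adj u v then W u * W v else 0) =
      (if G.Adj u v then W u * W v else 0)
      + (if u = y then ((if G.Adj x v then W y * W v else 0)
          - (if G.Adj y v then W y * W v else 0)) else 0)
      + (if u = z then ((if G.Adj x v then W z * W v else 0)
          - (if G.Adj z v then W z * W v else 0)) else 0)
      + (if v = y then ((if G.Adj x u then W u * W y else 0)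
          - (if G.Adj y u then W u * W y else 0)) else 0)
      + (if v = z then ((if G.Adj x u then W u * W z else 0)
          - (if G.Adj z u then W u * W z else 0)) else 0)
      + (if u = y ∧ v = z then W y * W z else 0)
      + (if u = z ∧ v = y then W z * W y else 0) := by
    intro u v
    by_cases hu1 : u = y
    · rw [hu1]
      by_cases hv1 : v = y
      · rw [hv1, if_congr (hAy y) rfl rfl]
        simp [hnxy, hyzne, G.loopless.irrefl y, hnyx, hAyz.ne']
      · by_cases hv2 : v = z
        · rw [hv2, if_congr (hAy z) rfl rfl]
          simp [hnxy, hnxz, hyzne, hzyne, hAyz, hAzy, hnyx, hnzx]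
          try ring
        · rw [if_congr (hAy v) rfl rfl, if_pos rfl, if_neg hyzne, if_neg hv1, if_neg hv2,
            if_neg (show ¬(y = y ∧ v = z) from fun h => hv2 h.2),
            if_neg (show ¬(y = z ∧ v = y) from fun h => hyzne h.1)]
          ring
    · by_cases hu2 : u = z
      · rw [hu2]
        by_cases hv1 : v = y
        · rw [hv1, if_congr (hAz y) rfl rfl]
          simp [hnxy, hnxz, hyzne, hzyne, hAyz, hAzy, hnyx, hnzx]
          try ring
        · by_cases hv2 : v = z
          · rw [hv2, if_congr (hAz z) rfl rfl]
            simp [hnxz, hzyne, G.loopless.irrefl z, hnzx, hAzy.ne']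
          · rw [if_congr (hAz v) rfl rfl, if_neg hzyne, if_pos rfl, if_neg hv1, if_neg hv2,
              if_neg (show ¬(z = y ∧ v = z) from fun h => hzyne h.1),
              if_neg (show ¬(z = z ∧ v = y) from fun h => hv1 h.2)]
            ring
      · by_cases hv1 : v = y
        · rw [hv1, if_congr (hAyv u) rfl rfl, if_neg hu1, if_neg hu2, if_pos rfl,
            if_neg hyzne, if_neg (show ¬(u = y ∧ y = z) from fun h => hu1 h.1),
            if_neg (show ¬(u = z ∧ y = y) from fun h => hu2 h.1),
            if_congr (G.adj_comm u y) rfl rfl]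
          ring
        · by_cases hv2 : v = z
          · rw [hv2, if_congr (hAzv u) rfl rfl, if_neg hu1, if_neg hu2, if_neg hzyne, if_pos rfl,
              if_neg (show ¬(u = y ∧ z = z) from fun h => hu1 h.1),
              if_neg (show ¬(u = z ∧ z = y) from fun h => hu2 h.1),
              if_congr (G.adj_comm u z) rfl rfl]
            ring
          · rw [if_congr (hR u v hu1 hu2 hv1 hv2) rfl rfl, if_neg hu1, if_neg hu2,
              if_neg hv1, if_neg hv2,
              if_neg (show ¬(u = y ∧ v = z) from fun h => hu1 h.1),
              if_neg (show ¬(u = z ∧ v = y) from fun h => hu2 h.1)]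
            ring
  calc (∑ u : Fin n, ∑ v : Fin n, if (copy2 G x y z).Adj u v then W u * W v else 0)
      = (∑ u : Fin n, ∑ v : Fin n, if G.Adj u v then W u * W v else 0)
        + (∑ u : Fin n, ∑ v : Fin n, if u = y then ((if G.Adj x v then W y * W v else 0)
            - (if G.Adj y v then W y * W v else 0)) else 0)
        + (∑ u : Fin n, ∑ v : Fin n, if u = z then ((if G.Adj x v then W z * W v else 0)
            - (if G.Adj z v then W z * W v else 0)) else 0)
        + (∑ u : Fin n, ∑ v : Fin n, if v = y then ((if G.Adj x u then W u * W y else 0)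
            - (if G.Adj y u then W u * W y else 0)) else 0)
        + (∑ u : Fin n, ∑ v : Fin n, if v = z then ((if G.Adj x u then W u * W z else 0)
            - (if G.Adj z u then W u * W z else 0)) else 0)
        + (∑ u : Fin n, ∑ v : Fin n, if u = y ∧ v = z then W y * W z else 0)
        + (∑ u : Fin n, ∑ v : Fin n, if u = z ∧ v = y then W z * W y else 0) := by
        simp_rw [key, Finset.sum_add_distrib]
    _ = (∑ u : Fin n, ∑ v : Fin n, if G.Adj u v then W u * W v else 0)
      + 2 * W y * ((∑ v : Fin n, if G.Adj x v then W v else 0)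
        - (∑ v : Fin n, if G.Adj y v then W v else 0))
      + 2 * W z * ((∑ v : Fin n, if G.Adj x v then W v else 0)
        - (∑ v : Fin n, if G.Adj z v then W v else 0))
      + 2 * W y * W z := by
        have hand : ∀ (a b : Fin n) (c : ℝ), (∑ u : Fin n, ∑ v : Fin n,
            if u = a ∧ v = b then c else 0) = c := by
          intro a b c
          have : ∀ u v : Fin n, (if u = a ∧ v = b then c else 0)
              = if u = a then (if v = b then c else 0) else 0 := by
            intro u v
            by_cases h1 : u = a <;> by_cases h2 : v = b <;> simp [h1, h2]
          simp_rw [this]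
          rw [sum_sum_ite_left]
          simp
        rw [sum_sum_ite_left, sum_sum_ite_left, sum_sum_ite_right, sum_sum_ite_right,
          hand, hand]
        simp_rw [Finset.sum_sub_distrib]
        simp_rw [ite_mul_left (a := W y), ite_mul_left (a := W z),
          ite_mul_right (b := W y), ite_mul_right (b := W z), ← Finset.mul_sum]
        ring

end Aux4

open scoped Classical in
/-- For `n ≥ 1`, `ℓ ≥ 3` and a strictly positive vertex-weight function `W`,
any `K_ℓ`-free graph `G` on `n` vertices maximizing the product-edge-weight
`w_Π(G) = ∑_{uv ∈ E(G)} W(u)W(v)` is complete multipartite: there are no three vertices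
`x, y, z` with `yz` an edge but `xy` and `xz` both non-edges. -/
theorem product_weight_extremal_complete_multipartite (n ℓ : ℕ) (hn : 1 ≤ n) (hℓ : 3 ≤ ℓ)
    (W : Fin n → ℝ) (hW : ∀ v, 0 < W v)
    (G : SimpleGraph (Fin n)) (hG : G.CliqueFree ℓ)
    (hmax : ∀ H : SimpleGraph (Fin n), H.CliqueFree ℓ →
      (∑ u : Fin n, ∑ v : Fin n, if H.Adj u v then W u * W v else 0) / 2 ≤
      (∑ u : Fin n, ∑ v : Fin n, if G.Adj u v then W u * W v else 0) / 2) :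
    ¬ ∃ x y z : Fin n, x ≠ y ∧ x ≠ z ∧ G.Adj y z ∧ ¬ G.Adj x y ∧ ¬ G.Adj x z := by
  rintro ⟨x, y, z, hxy, hxz, hyz, hnxy, hnxz⟩
  have hdy : (∑ v : Fin n, if G.Adj y v then W v else 0)
      ≤ (∑ v : Fin n, if G.Adj x v then W v else 0) := by
    have h1 := hmax (copyG G x y) (copyG_cliqueFree hG x y hxy)
    rw [copyG_wsum W G x y hnxy] at h1
    nlinarith [hW x]
  have hdz : (∑ v : Fin n, if G.Adj z v then W v else 0)
      ≤ (∑ v : Fin n, if G.Adj x v then W v else 0) := by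
    have h1 := hmax (copyG G x z) (copyG_cliqueFree hG x z hxz)
    rw [copyG_wsum W G x z hnxz] at h1
    nlinarith [hW x]
  have h2 := hmax (copy2 G x y z) (copy2_cliqueFree hG hxy hxz hyz.ne)
  rw [copy2_wsum W G x y z hnxy hnxz hyz] at h2
  nlinarith [mul_nonneg (hW y).le (sub_nonneg.2 hdy), mul_nonneg (hW z).le (sub_nonneg.2 hdz),
    mul_pos (hW y) (hW z)]
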